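/- Let r ≥ 1, let G be the free group on r generators, let n be a natural number, and let K be a set. Let B = {f ∈ G : |f| ≤ n} be the ball of radius n around the identity with respect to the word metric, and let S be the set consisting of the r free generators of G together with their inverses. Suppose z : G → K^B is a map such that for every g ∈ G and every s ∈ S there exists y ∈ K^G with z(g)(f) = y(fg) for all f ∈ B and z(sg)(f) = y(fsg) for all f ∈ B. Then there exists a single y ∈ K^G such that z(g)(f) = y(fg) for all g ∈ G and all f ∈ B. (In other words, the local two-point consistency condition implies that z lies in the image of the coding map φ : K^G → (K^B)^G, φ(x)(g)(f) = x(fg).) -/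

import Mathlib

/-- For the free group `G` on `r ≥ 1` generators, `B` the ball of radius `n`
around the identity in the word metric, and `S` the set of the `r` free generators together
with their inverses: if `z : G → K^B` satisfies the local two-point consistency condition
(for every `g ∈ G`, `s ∈ S` there is `y ∈ K^G` with `z(g)(f) = y(fg)` and `z(sg)(f) = y(fsg)`
for all `f ∈ B`), then there is a single `y ∈ K^G` with `z(g)(f) = y(fg)` for all `g, f`;
i.e. `z` lies in the image of the coding map `φ : K^G → (K^B)^G`, `φ(x)(g)(f) = x(fg)`. -/
theorem local_consistency_implies_global_coding
    (r : ℕ) (hr : 1 ≤ r) (n : ℕ) (K : Type*)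
    (S : Set (FreeGroup (Fin r)))
    (hS : S = {s | ∃ i : Fin r, s = FreeGroup.of i ∨ s = (FreeGroup.of i)⁻¹})
    (z : FreeGroup (Fin r) → {f : FreeGroup (Fin r) // f.norm ≤ n} → K)
    (hz : ∀ g : FreeGroup (Fin r), ∀ s ∈ S, ∃ y : FreeGroup (Fin r) → K,
      (∀ f : {f : FreeGroup (Fin r) // f.norm ≤ n}, z g f = y (f.1 * g)) ∧
      (∀ f : {f : FreeGroup (Fin r) // f.norm ≤ n}, z (s * g) f = y (f.1 * (s * g)))) :
    ∃ y : FreeGroup (Fin r) → K,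
      ∀ (g : FreeGroup (Fin r)) (f : {f : FreeGroup (Fin r) // f.norm ≤ n}),
        z g f = y (f.1 * g) := by
  have h1 : (1 : FreeGroup (Fin r)).norm ≤ n := by simp [FreeGroup.norm_one]
  -- main claim by strong induction on the norm of f
  have key : ∀ m : ℕ, ∀ f : FreeGroup (Fin r), f.norm ≤ m → ∀ hf : f.norm ≤ n,
      ∀ g : FreeGroup (Fin r), z g ⟨f, hf⟩ = z (f * g) ⟨1, h1⟩ := by
    intro m
    induction m with
    | zero =>
      intro f hm hf g
      have hf1 : f = 1 := FreeGroup.norm_eq_zero.mp (Nat.le_zero.mp hm)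
      subst hf1
      simp
    | succ m ih =>
      intro f hm hf g
      by_cases hf1 : f = 1
      · subst hf1; simp
      · -- peel the last letter of f
        set l := f.toWord with hl
        have hlne : l ≠ [] := by
          simp only [hl, ne_eq, FreeGroup.toWord_eq_nil_iff]
          exact hf1
        set a := l.getLast hlne with ha
        set s : FreeGroup (Fin r) := FreeGroup.mk [a] with hs
        set f' : FreeGroup (Fin r) := FreeGroup.mk l.dropLast with hf'
        have hfs : f' * s = f := by
          rw [hf', hs, FreeGroup.mul_mk, List.dropLast_append_getLast hlne, hl,
            FreeGroup.mk_toWord]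
        have hsS : s ∈ S := by
          rw [hS]
          refine ⟨a.1, ?_⟩
          rcases a with ⟨i, b⟩
          cases b
          · right
            rw [hs, FreeGroup.of, ← FreeGroup.invRev_invRev (L₁ := [(i, false)]),
              ← FreeGroup.inv_mk]
            simp [FreeGroup.invRev]
          · left; rfl
        have hf'norm : f'.norm ≤ m := by
          have h2 : f'.norm ≤ l.dropLast.length := FreeGroup.norm_mk_le
          have h3 : l.dropLast.length = l.length - 1 := List.length_dropLast
          have h4 : l.length = f.norm := rfl
          have h5 : 1 ≤ l.length := List.length_pos_iff.mpr hlne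
          omega
        have hf'n : f'.norm ≤ n := by
          have h2 : f'.norm ≤ l.dropLast.length := FreeGroup.norm_mk_le
          have h3 : l.dropLast.length = l.length - 1 := List.length_dropLast
          have h4 : l.length = f.norm := rfl
          have h5 : f.norm ≤ n := hf
          omega
        obtain ⟨y, hy1, hy2⟩ := hz g s hsS
        have e1 : z g ⟨f, hf⟩ = y (f * g) := hy1 ⟨f, hf⟩
        have e2 : z (s * g) ⟨f', hf'n⟩ = y (f * g) := by
          have := hy2 ⟨f', hf'n⟩
          rw [this]
          rw [← hfs]
          group
        have e3 : z (s * g) ⟨f', hf'n⟩ = z (f' * (s * g)) ⟨1, h1⟩ :=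
          ih f' hf'norm hf'n (s * g)
        rw [e1, ← e2, e3, ← mul_assoc, hfs]
  refine ⟨fun g => z g ⟨1, h1⟩, fun g f => ?_⟩
  have := key f.1.norm f.1 le_rfl f.2 g
  simpa using this
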